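/- Let γ ∈ (1,2), define χ(π) = (γ − 2/3)·π² + γ·π, and set π_m = 2/( γ + √(γ² + 4(γ − 2/3)) ). Then 0 < π_m < 1, and for every π ∈ (0,1] the relativistic compressibility conditions π/(2π+1) < χ(π) < 1 and χ′(π)·(χ(π)−π)·(π+1) > −2·χ(π)·(1−χ(π)) hold if and only if π < π_m. (Note that χ(π) − π = (γ−2/3)π² + (γ−1)π > 0 for π ∈ (0,1], so the second inequality is the compressibility condition χ′(π) > −2χ(π)(1−χ(π))/((χ(π)−π)(π+1)) cleared of its positive denominator.) -/
import Mathlib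


/-- Section 7: for the Stephani models approximating a classical ideal gas of adiabatic
index `γ`, with indicatrix `χ(π) = (γ−2/3)π² + γπ`, the relativistic compressibility
conditions hold for `π ∈ (0,1]` exactly when `π < π_m`, where
`π_m = 2/(γ + √(γ² + 4(γ−2/3))) < 1`. -/
theorem stmt_19
    (γ : ℝ) (hγ : γ ∈ Set.Ioo (1 : ℝ) 2)
    (χ : ℝ → ℝ) (hχdef : ∀ π : ℝ, χ π = (γ - 2/3) * π^2 + γ * π)
    (πm : ℝ) (hπm : πm = 2 / (γ + Real.sqrt (γ^2 + 4 * (γ - 2/3)))) :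
    0 < πm ∧ πm < 1 ∧
    (∀ π ∈ Set.Ioc (0 : ℝ) 1, 0 < χ π - π) ∧
    (∀ π ∈ Set.Ioc (0 : ℝ) 1,
      (π / (2 * π + 1) < χ π ∧ χ π < 1 ∧
        deriv χ π * (χ π - π) * (π + 1) > -2 * χ π * (1 - χ π)) ↔ π < πm) := by
  obtain ⟨hγ1, hγ2⟩ := hγ
  set s := Real.sqrt (γ^2 + 4 * (γ - 2/3)) with hs
  have hs2 : s^2 = γ^2 + 4 * (γ - 2/3) := Real.sq_sqrt (by nlinarith)
  have hs0 : 0 ≤ s := Real.sqrt_nonneg _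
  have hsγ : γ < s := by nlinarith
  have hden : 0 < γ + s := by linarith
  have hπm0 : 0 < πm := by rw [hπm]; positivity
  have hprod : πm * (γ + s) = 2 := by
    rw [hπm]; field_simp
  have hχmeq : (γ - 2/3) * πm^2 + γ * πm = 1 := by nlinarith [hprod, hs2]
  have hπm1 : πm < 1 := by nlinarith
  have hderiv : ∀ x : ℝ, deriv χ x = 2 * (γ - 2/3) * x + γ := by
    intro x
    have hfun : χ = fun y => (γ - 2/3) * y^2 + γ * y := funext fun y => hχdef y
    have h1 : HasDerivAt (fun y : ℝ => (γ - 2/3) * y^2 + γ * y)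
        ((γ - 2/3) * (2 * x^1) + γ * 1) x :=
      ((hasDerivAt_pow 2 x).const_mul (γ - 2/3)).add ((hasDerivAt_id x).const_mul γ)
    rw [hfun, h1.deriv]; ring
  have hpos : ∀ π ∈ Set.Ioc (0 : ℝ) 1, 0 < χ π - π := by
    rintro π ⟨hπ0, hπ1⟩
    rw [hχdef]; nlinarith
  refine ⟨hπm0, hπm1, hpos, ?_⟩
  rintro π ⟨hπ0, hπ1⟩
  constructor
  · rintro ⟨-, h1, -⟩
    by_contra h
    push_neg at h
    rw [hχdef] at h1
    nlinarith [mul_nonneg (sub_nonneg.2 h) (by linarith : (0:ℝ) ≤ π + πm)]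
  · intro h
    have hχlt1 : χ π < 1 := by
      rw [hχdef]
      nlinarith [mul_nonneg (by linarith : (0:ℝ) ≤ πm - π) (by linarith : (0:ℝ) ≤ πm + π)]
    have hχpos : 0 < χ π := by rw [hχdef]; nlinarith
    have hcp : 0 < χ π - π := hpos π ⟨hπ0, hπ1⟩
    refine ⟨?_, hχlt1, ?_⟩
    · rw [hχdef, div_lt_iff₀ (by linarith)]
      nlinarith [mul_pos (by linarith : (0:ℝ) < γ - 1) hπ0, pow_pos hπ0 2, pow_pos hπ0 3, mul_pos hπ0 hπ0]
    · rw [hderiv π]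
      have hL : 0 < (2 * (γ - 2/3) * π + γ) * (χ π - π) * (π + 1) :=
        mul_pos (mul_pos (by nlinarith) hcp) (by linarith)
      have hR : 0 < χ π * (1 - χ π) := mul_pos hχpos (by linarith)
      linarith [hL, hR]
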